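/- Let v be a non-decreasing submodular function on a finite set M, and let X = {x_1, …, x_k} and Y = {y_1, …, y_k} be two k-element subsets of M. If for every j ∈ [k] the marginal values satisfy v(x_j | {x_1,…,x_{j−1}}) ≥ v(y_j | {x_1,…,x_{j−1}}), then v(X) ≥ (1/2)·v(Y). -/
import Mathlib

/-- The set `{x_1, …, x_{r−1}}` of goods indexed strictly below `r`. -/
def prefixSet {G : Type*} [DecidableEq G] {k : ℕ} (x : Fin k → G) (r : Fin k) : Finset G :=
  (Finset.univ.filter fun j => j < r).image x

lemma prefixSet_castSucc {G : Type*} [DecidableEq G] {k : ℕ} (x : Fin (k+1) → G) (j : Fin k) :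
    prefixSet x j.castSucc = prefixSet (x ∘ Fin.castSucc) j := by
  unfold prefixSet
  ext a
  simp only [Finset.mem_image, Finset.mem_filter, Finset.mem_univ, true_and, Function.comp]
  constructor
  · rintro ⟨i, hi, rfl⟩
    have hik : i.val < k := lt_of_lt_of_le (by simpa [Fin.lt_def] using hi) j.isLt.le
    exact ⟨⟨i.val, hik⟩, by simpa [Fin.lt_def] using hi, rfl⟩
  · rintro ⟨i, hi, rfl⟩
    exact ⟨i.castSucc, Fin.castSucc_lt_castSucc_iff.mpr hi, rfl⟩

lemma prefixSet_last {G : Type*} [DecidableEq G] {k : ℕ} (x : Fin (k+1) → G) :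
    prefixSet x (Fin.last k) = Finset.univ.image (x ∘ Fin.castSucc) := by
  unfold prefixSet
  ext a
  simp only [Finset.mem_image, Finset.mem_filter, Finset.mem_univ, true_and, Function.comp]
  constructor
  · rintro ⟨i, hi, rfl⟩
    obtain ⟨j, rfl⟩ := Fin.exists_castSucc_eq.mpr (Fin.ne_last_of_lt hi)
    exact ⟨j, rfl⟩
  · rintro ⟨i, rfl⟩
    exact ⟨i.castSucc, i.castSucc_lt_last, rfl⟩

lemma image_univ_succ {G : Type*} [DecidableEq G] {k : ℕ} (x : Fin (k+1) → G) :
    Finset.univ.image x = insert (x (Fin.last k)) (Finset.univ.image (x ∘ Fin.castSucc)) := by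
  ext a
  simp only [Finset.mem_image, Finset.mem_univ, true_and, Finset.mem_insert, Function.comp]
  constructor
  · rintro ⟨i, rfl⟩
    rcases eq_or_ne i (Fin.last k) with rfl | hne
    · exact Or.inl rfl
    · obtain ⟨j, rfl⟩ := Fin.exists_castSucc_eq.mpr hne
      exact Or.inr ⟨j, rfl⟩
  · rintro (rfl | ⟨i, rfl⟩)
    exacts [⟨_, rfl⟩, ⟨_, rfl⟩]

/-- General telescoping over a base set `S`. -/
lemma telescope {G : Type*} [DecidableEq G] (v : Finset G → ℝ) :
    ∀ (k : ℕ) (y : Fin k → G) (S : Finset G),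
      v (S ∪ Finset.univ.image y) =
        v S + ∑ j : Fin k,
          (v (insert (y j) (S ∪ prefixSet y j)) - v (S ∪ prefixSet y j))
  | 0, y, S => by simp
  | (k+1), y, S => by
      rw [Fin.sum_univ_castSucc]
      simp only [prefixSet_castSucc, prefixSet_last]
      have IH := telescope v k (y ∘ Fin.castSucc) S
      have hins : S ∪ Finset.univ.image y =
          insert (y (Fin.last k)) (S ∪ Finset.univ.image (y ∘ Fin.castSucc)) := by
        rw [image_univ_succ y, Finset.union_insert]
      rw [hins]
      have : (fun j : Fin k =>
          v (insert (y j.castSucc) (S ∪ prefixSet (y ∘ Fin.castSucc) j)) -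
            v (S ∪ prefixSet (y ∘ Fin.castSucc) j)) =
          (fun j : Fin k =>
          v (insert ((y ∘ Fin.castSucc) j) (S ∪ prefixSet (y ∘ Fin.castSucc) j)) -
            v (S ∪ prefixSet (y ∘ Fin.castSucc) j)) := rfl
      rw [this]
      linarith [IH]

/-- Telescoping for the empty base set. -/
lemma telescope_empty {G : Type*} [DecidableEq G] (v : Finset G → ℝ) (hz : v ∅ = 0)
    {k : ℕ} (x : Fin k → G) :
    v (Finset.univ.image x) =
      ∑ j : Fin k, (v (insert (x j) (prefixSet x j)) - v (prefixSet x j)) := by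
  have := telescope v k x ∅
  simpa [hz] using this

theorem submodular_half_bound {G : Type*} [DecidableEq G] (v : Finset G → ℝ)
    (hnn : ∀ S, 0 ≤ v S) (hz : v ∅ = 0)
    (hmono : ∀ S T : Finset G, S ⊆ T → v S ≤ v T)
    (hsub : ∀ S T : Finset G, ∀ g, S ⊆ T → g ∉ T →
      v (insert g T) - v T ≤ v (insert g S) - v S)
    {k : ℕ} (x y : Fin k → G)
    (hx : Function.Injective x) (hy : Function.Injective y)
    (h : ∀ j : Fin k,
      v (insert (x j) (prefixSet x j)) - v (prefixSet x j) ≥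
        v (insert (y j) (prefixSet x j)) - v (prefixSet x j)) :
    v (Finset.univ.image x) ≥ (1 / 2) * v (Finset.univ.image y) := by
  set X := Finset.univ.image x with hX
  set Y := Finset.univ.image y with hY
  -- prefixSet x j ⊆ X
  have hprefX : ∀ j : Fin k, prefixSet x j ⊆ X := by
    intro j a ha
    simp only [prefixSet, Finset.mem_image, Finset.mem_filter, Finset.mem_univ, true_and] at ha
    obtain ⟨i, _, rfl⟩ := ha
    exact Finset.mem_image_of_mem x (Finset.mem_univ i)
  -- each telescoping term for Y over base X is bounded by the x-marginal
  have key : ∀ j : Fin k,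
      v (insert (y j) (X ∪ prefixSet y j)) - v (X ∪ prefixSet y j) ≤
        v (insert (x j) (prefixSet x j)) - v (prefixSet x j) := by
    intro j
    by_cases hmem : y j ∈ X ∪ prefixSet y j
    · rw [Finset.insert_eq_self.mpr hmem]
      have h1 : v (prefixSet x j) ≤ v (insert (y j) (prefixSet x j)) :=
        hmono _ _ (Finset.subset_insert _ _)
      have := h j
      linarith
    · have hsubset : prefixSet x j ⊆ X ∪ prefixSet y j :=
        (hprefX j).trans Finset.subset_union_left
      have h2 := hsub (prefixSet x j) (X ∪ prefixSet y j) (y j) hsubset hmem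
      have := h j
      linarith
  have teleY := telescope v k y X
  have teleX := telescope_empty v hz x
  have hsum : ∑ j : Fin k, (v (insert (y j) (X ∪ prefixSet y j)) - v (X ∪ prefixSet y j)) ≤
      ∑ j : Fin k, (v (insert (x j) (prefixSet x j)) - v (prefixSet x j)) :=
    Finset.sum_le_sum fun j _ => key j
  have hYle : v Y ≤ v (X ∪ Y) := hmono _ _ Finset.subset_union_right
  have : v (X ∪ Y) ≤ 2 * v X := by
    rw [teleY]
    rw [teleX] at *
    linarith
  linarith
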